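/- For the function G(t₁,t₂,t₃) = −(π⁴/(t₁³t₂³t₃³))·[9t₁⁴t₂⁴t₃⁴ + 27·Sym(t₁⁴t₂⁴) − 42·Sym(t₁⁴t₂⁴t₃²) − 42·Sym(t₁⁴t₂²t₃²)] on (0,∞)³ (where Sym denotes symmetrization of the monomial over the 3 variables with normalizing factor 1/3!), the points (1,1,1) and (√(5/9), √(5/9), √(5/9)) are critical points, with values G(1,1,1) = 48π⁴ and G(√(5/9),√(5/9),√(5/9)) = (64√5/3)π⁴. -/

import Mathlib

open Real

/-- Symmetrization over the three variables of the monomial `x^a y^b z^c`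
with normalizing factor `1/3!`. -/
noncomputable def sym3 (a b c : ℕ) (x y z : ℝ) : ℝ :=
  (1/6) * ∑ σ : Equiv.Perm (Fin 3),
    (![x, y, z] (σ 0))^a * (![x, y, z] (σ 1))^b * (![x, y, z] (σ 2))^c

/-- The 4-torus energy function in ratio variables. -/
noncomputable def Gtorus (t₁ t₂ t₃ : ℝ) : ℝ :=
  -(π^4/(t₁^3*t₂^3*t₃^3)) *
    (9*t₁^4*t₂^4*t₃^4 + 27*sym3 4 4 0 t₁ t₂ t₃
      - 42*sym3 4 4 2 t₁ t₂ t₃ - 42*sym3 4 2 2 t₁ t₂ t₃)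

lemma sym3_expand (a b c : ℕ) (x y z : ℝ) :
    sym3 a b c x y z = (1/6)*(x^a*y^b*z^c + x^a*z^b*y^c + y^a*x^b*z^c
      + z^a*x^b*y^c + y^a*z^b*x^c + z^a*y^b*x^c) := by
  rw [sym3, show (Finset.univ : Finset (Equiv.Perm (Fin 3))) =
    {1, Equiv.swap 1 2, Equiv.swap 0 1, Equiv.swap 0 1 * Equiv.swap 1 2,
     Equiv.swap 1 2 * Equiv.swap 0 1, Equiv.swap 0 2} from by decide]
  rw [Finset.sum_insert (by decide), Finset.sum_insert (by decide),
    Finset.sum_insert (by decide), Finset.sum_insert (by decide),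
    Finset.sum_insert (by decide), Finset.sum_singleton]
  norm_num [Equiv.swap_apply_def, Equiv.Perm.mul_apply, Fin.ext_iff]
  simp only [Matrix.cons_val_two, Matrix.tail_cons, Matrix.head_cons]
  ring

lemma Gtorus_eq (x y z : ℝ) : Gtorus x y z = -(π^4/(x^3*y^3*z^3)) *
    (9*x^4*y^4*z^4 + 9*(x^4*y^4+x^4*z^4+y^4*z^4)
      - 14*(x^4*y^4*z^2+x^4*z^4*y^2+y^4*z^4*x^2)
      - 14*(x^4*y^2*z^2+y^4*x^2*z^2+z^4*x^2*y^2)) := by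
  rw [Gtorus, sym3_expand, sym3_expand, sym3_expand]; ring

lemma Gswap1 (x y z : ℝ) : Gtorus x y z = Gtorus y x z := by
  rw [Gtorus_eq, Gtorus_eq]; ring

lemma Gswap2 (x y z : ℝ) : Gtorus x y z = Gtorus z y x := by
  rw [Gtorus_eq, Gtorus_eq]; ring

lemma hfun (y : ℝ) (hy : y ≠ 0) : (fun s => Gtorus s y y)
    = fun s => π^4*((-(9*y^8+4*y^4-28*y^6)/y^6)*s + ((14*y^8+28*y^6)/y^6)*s⁻¹
        + (-(9*y^2))*(s⁻¹)^3) := by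
  funext s
  rcases eq_or_ne s 0 with hs | hs
  · subst hs; simp [Gtorus_eq]
  · rw [Gtorus_eq]; field_simp; ring

lemma derivRat (A B C x : ℝ) (hx : x ≠ 0) :
    deriv (fun s : ℝ => π^4*(A*s + B*s⁻¹ + C*(s⁻¹)^3)) x
      = π^4*(A - B*(x^2)⁻¹ - 3*C*(x^2)⁻¹*(x⁻¹)^2) := by
  have h : HasDerivAt (fun s : ℝ => π^4*(A*s + B*s⁻¹ + C*(s⁻¹)^3))
      (π^4*(A - B*(x^2)⁻¹ - 3*C*(x^2)⁻¹*(x⁻¹)^2)) x := by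
    have := ((((hasDerivAt_id x).const_mul A).add
      ((hasDerivAt_inv hx).const_mul B)).add
      (((hasDerivAt_inv hx).pow 3).const_mul C)).const_mul (π^4)
    refine this.congr_deriv ?_
    push_cast
    ring
  exact h.deriv

/-- `(1,1,1)` and `(√(5/9),√(5/9),√(5/9))` are critical points of `G`, with values
`48π⁴` and `(64√5/3)π⁴`. -/
theorem stmt_5 :
    (deriv (fun s => Gtorus s 1 1) 1 = 0 ∧
     deriv (fun s => Gtorus 1 s 1) 1 = 0 ∧
     deriv (fun s => Gtorus 1 1 s) 1 = 0) ∧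
    (let c := Real.sqrt (5/9)
     deriv (fun s => Gtorus s c c) c = 0 ∧
     deriv (fun s => Gtorus c s c) c = 0 ∧
     deriv (fun s => Gtorus c c s) c = 0) ∧
    Gtorus 1 1 1 = 48*π^4 ∧
    Gtorus (Real.sqrt (5/9)) (Real.sqrt (5/9)) (Real.sqrt (5/9))
      = (64*Real.sqrt 5/3)*π^4 := by
  set c := Real.sqrt (5/9) with hcdef
  have hc2 : c^2 = 5/9 := Real.sq_sqrt (by norm_num)
  have hc0 : c ≠ 0 := by positivity
  have h4 : c^4 = 25/81 := by rw [show (4:ℕ)=2*2 from rfl, pow_mul, hc2]; norm_num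
  have h6 : c^6 = 125/729 := by rw [show (6:ℕ)=2*3 from rfl, pow_mul, hc2]; norm_num
  have h8 : c^8 = 625/6561 := by rw [show (8:ℕ)=2*4 from rfl, pow_mul, hc2]; norm_num
  have hcs : c = Real.sqrt 5 / 3 := by
    rw [hcdef, show (5/9:ℝ) = (Real.sqrt 5/3)^2 by
      rw [div_pow, Real.sq_sqrt (by norm_num : (0:ℝ) ≤ 5)]; norm_num,
      Real.sqrt_sq (by positivity)]
  have e1 : (fun s => Gtorus 1 s 1) = fun s => Gtorus s 1 1 :=
    funext fun s => (Gswap1 s 1 1).symm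
  have e2 : (fun s => Gtorus 1 1 s) = fun s => Gtorus s 1 1 :=
    funext fun s => (Gswap2 s 1 1).symm
  have e3 : (fun s => Gtorus c s c) = fun s => Gtorus s c c :=
    funext fun s => (Gswap1 s c c).symm
  have e4 : (fun s => Gtorus c c s) = fun s => Gtorus s c c :=
    funext fun s => (Gswap2 s c c).symm
  have d1 : deriv (fun s => Gtorus s 1 1) 1 = 0 := by
    rw [hfun 1 one_ne_zero, derivRat _ _ _ 1 one_ne_zero]; norm_num
  have d2 : deriv (fun s => Gtorus s c c) c = 0 := by
    rw [hfun c hc0, derivRat _ _ _ c hc0, inv_pow, h8, h6, h4, hc2]; norm_num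
  have v1 : Gtorus 1 1 1 = 48*π^4 := by
    rw [congrFun (hfun 1 one_ne_zero) 1]; norm_num; ring
  have v2 : Gtorus c c c = (64*Real.sqrt 5/3)*π^4 := by
    rw [congrFun (hfun c hc0) c, h8, h6, h4, hc2, hcs]
    have hk : Real.sqrt 5 ^ 2 = 5 := Real.sq_sqrt (by norm_num)
    have hk0 : Real.sqrt 5 ≠ 0 := by positivity
    field_simp
    rw [show Real.sqrt 5 ^ 4 = (Real.sqrt 5 ^ 2) ^ 2 by ring, hk]
    norm_num
  exact ⟨⟨d1, by rw [e1]; exact d1, by rw [e2]; exact d1⟩,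
    ⟨d2, by rw [e3]; exact d2, by rw [e4]; exact d2⟩, v1, v2⟩
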